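/- For the Boolean semiring coefficients, H_m(S^n, H𝔹) = {*} when m ≠ n and H_m(S^n, H𝔹) = H𝔹 (as Γ-sets) when m = n. In particular π^comb_n(H𝔹 ∘ S^n) ≅ 𝔹 = {*, 1} (a two-element pointed set). -/

import Mathlib

/-- A pointed simplicial set, recorded through the data relevant for combinatorial
homotopy: levelwise pointed sets of simplices together with basepoint-preserving face
maps `d n j : X_{n+1} → X_n` (the `j`-th face, meaningful for `j ≤ n + 1`). -/
structure PSS where
  obj : ℕ → Type
  pt : ∀ n, obj n
  d : ∀ n, ℕ → obj (n + 1) → obj n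
  d_pt : ∀ n j, d n j (pt (n + 1)) = pt n

namespace PSS

/-- `x ∈ X_n` is spherical when all its faces are the basepoint; by Yoneda such simplices
are exactly the pointed simplicial maps `Sⁿ → X`. -/
def isSph (X : PSS) : ∀ n, X.obj n → Prop
  | 0 => fun _ => True
  | n + 1 => fun x => ∀ j ≤ n + 1, X.d n j x = X.pt n

/-- The set `Hom_{S*}(Sⁿ, X)` of spherical `n`-simplices. -/
def Sph (X : PSS) (n : ℕ) := {x : X.obj n // X.isSph n x}

/-- The homotopy relation between spherical `n`-simplices (May, Definition 3.1):
`x R y` iff there is `z ∈ X_{n+1}` with `∂_j z = *` for `j < n`, `∂_n z = x`,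
`∂_{n+1} z = y`. -/
def Rel (X : PSS) (n : ℕ) (a b : X.Sph n) : Prop :=
  ∃ z : X.obj (n + 1),
    (∀ j < n, X.d n j z = X.pt n) ∧ X.d n n z = a.1 ∧ X.d n (n + 1) z = b.1

/-- Combinatorial homotopy `π^comb_n(X)`: spherical `n`-simplices modulo the equivalence
relation generated by the homotopy relation `Rel`. -/
def picomb (X : PSS) (n : ℕ) := Quot (X.Rel n)

/-- The basepoint is spherical. -/
def sphPt (X : PSS) (n : ℕ) : X.Sph n :=
  ⟨X.pt n, by cases n with
    | zero => trivial
    | succ m => exact fun j _ => X.d_pt m j⟩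

/-- The basepoint of `π^comb_n(X)`. -/
def picombPt (X : PSS) (n : ℕ) : X.picomb n := Quot.mk _ (X.sphPt n)

end PSS

/-- The relation whose quotient collapses the wedge `A ∨ k₊ ⊆ A × k₊` to a point. -/
def WedgeRel (A : Type) (a0 : A) (k : ℕ) (u v : A × Fin (k + 1)) : Prop :=
  (u.1 = a0 ∨ u.2 = 0) ∧ (v.1 = a0 ∨ v.2 = 0)

/-- The smash product `A ∧ k₊` of a pointed set `(A, a0)` with the pointed set
`k₊ = {0, 1, …, k}` (basepoint `0`). -/
def Smash (A : Type) (a0 : A) (k : ℕ) := Quot (WedgeRel A a0 k)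

/-- The smash product `X ∧ k₊` of a pointed simplicial set with the discrete pointed
set `k₊`; faces act on the `X`-factor only. -/
def PSS.smash (X : PSS) (k : ℕ) : PSS where
  obj n := Smash (X.obj n) (X.pt n) k
  pt n := Quot.mk _ (X.pt n, 0)
  d n j := Quot.map (fun u => (X.d n j u.1, u.2)) (by
    rintro u v ⟨hu, hv⟩
    refine ⟨?_, ?_⟩
    · rcases hu with h | h
      · exact Or.inl (by dsimp only; rw [h]; exact X.d_pt n j)
      · exact Or.inr h
    · rcases hv with h | h
      · exact Or.inl (by dsimp only; rw [h]; exact X.d_pt n j)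
      · exact Or.inr h)
  d_pt n j := by
    show Quot.mk _ (X.d n j (X.pt (n + 1)), (0 : Fin (k + 1))) = Quot.mk _ (X.pt n, 0)
    rw [X.d_pt]

/-- The coface map `δ_j : [q] → [q+1]` (the monotone injection skipping `j`),
with the index `j` clamped into range. -/
def coface (q j : ℕ) : Fin (q + 1) → Fin (q + 2) :=
  Fin.succAbove ⟨min j (q + 1), by omega⟩

/-- The combinatorial sphere `S^m = Δ[m]/∂Δ[m]`: its nonbasepoint `q`-simplices are the
monotone surjections `[q] → [m]`; faces are precomposition with cofaces, collapsing
non-surjective composites to the basepoint. -/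
def SphSS (m : ℕ) : PSS where
  obj q := Option {f : Fin (q + 1) → Fin (m + 1) // Monotone f ∧ Function.Surjective f}
  pt _ := none
  d q j x := x.bind (fun f =>
    if h : Function.Surjective (f.1 ∘ coface q j)
    then some ⟨f.1 ∘ coface q j, f.2.1.comp (Fin.strictMono_succAbove _).monotone, h⟩
    else none)
  d_pt _ _ := rfl

open scoped Classical

/-- The pointed simplicial set `H𝔹 ∘ X`: levelwise, the finite subsets of `X_n`
containing the basepoint, with faces acting by direct image. -/
noncomputable def HBpss (X : PSS) : PSS where
  obj n := {Z : Finset (X.obj n) // X.pt n ∈ Z}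
  pt n := ⟨{X.pt n}, Finset.mem_singleton_self _⟩
  d n j Z := ⟨Z.1.image (X.d n j), by
    rw [← X.d_pt n j]; exact Finset.mem_image_of_mem _ Z.2⟩
  d_pt n j := by
    apply Subtype.ext
    simp [X.d_pt n j]

-- auxiliary lemma block, to be inserted before stmt11
section Aux

open Function

lemma coface_eq (q : ℕ) (j : Fin (q + 2)) : coface q j.val = Fin.succAbove j := by
  have h : (⟨min j.val (q + 1), by omega⟩ : Fin (q + 2)) = j :=
    Fin.ext (by simp [Nat.min_eq_left (Nat.lt_succ_iff.mp j.isLt)])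
  unfold coface
  rw [h]

lemma surj_comp_succAbove {q n : ℕ} {f : Fin (q + 2) → Fin (n + 1)} (hf : Surjective f)
    (j x : Fin (q + 2)) (hx : x ≠ j) (hfx : f x = f j) :
    Surjective (f ∘ Fin.succAbove j) := by
  intro y
  obtain ⟨x₀, hx₀⟩ := hf y
  by_cases h : x₀ = j
  · subst h
    obtain ⟨c, hc⟩ := Fin.exists_succAbove_eq hx
    refine ⟨c, ?_⟩
    show f (x₀.succAbove c) = y
    rw [hc, hfx, hx₀]
  · obtain ⟨c, hc⟩ := Fin.exists_succAbove_eq h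
    exact ⟨c, by simp only [Function.comp_apply, hc, hx₀]⟩

lemma monotone_surj_id {N : ℕ} (f : Fin (N + 1) → Fin (N + 1)) (hm : Monotone f)
    (hs : Surjective f) : f = id := by
  have hinj : Function.Injective f := Finite.injective_iff_surjective.mpr hs
  have hsm : StrictMono f := hm.strictMono_of_injective hinj
  have inst : WellFoundedLT (Fin (N + 1)) := inferInstance
  exact (@StrictMono.range_inj (Fin (N + 1)) (Fin (N + 1)) _ _ inst f id hsm strictMono_id).1
    (by rw [hs.range_eq, Set.range_id])

lemma sph_inj {q n : ℕ} (f : Fin (q + 2) → Fin (n + 1)) (hs : Surjective f)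
    (h : ∀ j : Fin (q + 2), ¬ Surjective (f ∘ Fin.succAbove j)) : Function.Injective f := by
  intro a b hab
  by_contra hne
  exact h a (surj_comp_succAbove hs a b (Ne.symm hne) hab.symm)

lemma sphSS_d_some {n q : ℕ} (j : ℕ)
    (f : {f : Fin (q + 2) → Fin (n + 1) // Monotone f ∧ Function.Surjective f}) :
    (SphSS n).d q j (some f) =
      if h : Function.Surjective (f.1 ∘ coface q j)
      then some ⟨f.1 ∘ coface q j, f.2.1.comp (Fin.strictMono_succAbove _).monotone, h⟩
      else none := rfl

lemma top_eq {n : ℕ} (f : Fin (n + 2) → Fin (n + 1)) (hs : Surjective f)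
    (h : ∀ j : ℕ, j < n → ¬ Surjective (f ∘ coface n j)) :
    f ⟨n, by omega⟩ = f ⟨n + 1, by omega⟩ := by
  by_contra hne
  have hinj : Function.Injective f := by
    intro a b hab
    by_contra hab'
    have key : ∀ c d : Fin (n + 2), c.val < n → d ≠ c → f d = f c → False := by
      intro c d hc hdc hfd
      have hnc := h c.val hc
      rw [coface_eq n c] at hnc
      exact hnc (surj_comp_succAbove hs c d hdc hfd)
    by_cases ha : a.val < n
    · exact key a b ha (fun hh => hab' hh.symm) hab.symm
    by_cases hb : b.val < n
    · exact key b a hb hab' hab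
    have hvne : a.val ≠ b.val := fun hh => hab' (Fin.ext hh)
    have ha2 := a.isLt
    have hb2 := b.isLt
    have hcase : (a.val = n ∧ b.val = n + 1) ∨ (a.val = n + 1 ∧ b.val = n) := by omega
    rcases hcase with ⟨h1, h2⟩ | ⟨h1, h2⟩
    · exact hne (by rw [show (⟨n, by omega⟩ : Fin (n+2)) = a from (Fin.ext h1.symm),
        show (⟨n+1, by omega⟩ : Fin (n+2)) = b from (Fin.ext h2.symm), hab])
    · exact hne (by rw [show (⟨n, by omega⟩ : Fin (n+2)) = b from (Fin.ext h2.symm),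
        show (⟨n+1, by omega⟩ : Fin (n+2)) = a from (Fin.ext h1.symm), hab])
  have := Fintype.card_le_of_injective f hinj
  simp only [Fintype.card_fin] at this
  omega

lemma core {n : ℕ} (a : (SphSS n).obj (n + 1))
    (h : ∀ j < n, (SphSS n).d n j a = none) :
    (SphSS n).d n n a = (SphSS n).d n (n + 1) a := by
  cases a with
  | none => rfl
  | some f =>
    have hns : ∀ j < n, ¬ Function.Surjective (f.1 ∘ coface n j) := by
      intro j hj hsurj
      have hh := h j hj
      rw [sphSS_d_some, dif_pos hsurj] at hh
      exact Option.some_ne_none _ hh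
    have htop : f.1 ⟨n, by omega⟩ = f.1 ⟨n + 1, by omega⟩ := top_eq f.1 f.2.2 hns
    have hcomp : f.1 ∘ coface n n = f.1 ∘ coface n (n + 1) := by
      funext x
      have h1 : coface n n = Fin.succAbove ⟨n, by omega⟩ :=
        coface_eq n ⟨n, by omega⟩
      have h2 : coface n (n + 1) = Fin.castSucc := by
        have := coface_eq n ⟨n + 1, by omega⟩
        rw [this]
        have : (⟨n + 1, by omega⟩ : Fin (n + 2)) = Fin.last (n + 1) := rfl
        rw [this, Fin.succAbove_last]
      simp only [Function.comp_apply, h1, h2]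
      rcases Nat.lt_or_ge x.val n with hx | hx
      · rw [Fin.succAbove_of_castSucc_lt]
        exact Fin.lt_def.mpr (by simpa using hx)
      · have hxe : x = Fin.last n := Fin.ext (by have := x.isLt; simp; omega)
        subst hxe
        have hsa : Fin.succAbove ⟨n, by omega⟩ (Fin.last n) = ⟨n + 1, by omega⟩ := by
          rw [Fin.succAbove_of_lt_succ]
          · rfl
          · exact Fin.lt_def.mpr (by simp)
        rw [hsa]
        have hcs : Fin.castSucc (Fin.last n) = (⟨n, by omega⟩ : Fin (n + 2)) := rfl
        rw [hcs, htop]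
    by_cases hS : Function.Surjective (f.1 ∘ coface n (n + 1))
    · rw [sphSS_d_some, sphSS_d_some, dif_pos (hcomp ▸ hS), dif_pos hS]
      exact congrArg some (Subtype.ext hcomp)
    · rw [sphSS_d_some, sphSS_d_some, dif_neg (hcomp ▸ hS), dif_neg hS]

end Aux

section Aux2

open Function

lemma smash_mk_eq_pt {A : Type} {a0 : A} {k : ℕ} {u : A × Fin (k + 1)}
    (h : (Quot.mk _ u : Smash A a0 k) = Quot.mk _ (a0, 0)) : u.1 = a0 ∨ u.2 = 0 := by
  have h2 := congrArg (Quot.lift (fun v : A × Fin (k + 1) => v.1 = a0 ∨ v.2 = 0)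
    (by rintro u v ⟨hu, hv⟩; exact propext (iff_of_true hu hv)) : Smash A a0 k → Prop) h
  exact Eq.mpr h2 (Or.inl rfl)

lemma smash_mk_pt {A : Type} {a0 : A} {k : ℕ} {u : A × Fin (k + 1)}
    (h : u.1 = a0 ∨ u.2 = 0) : (Quot.mk _ u : Smash A a0 k) = Quot.mk _ (a0, 0) :=
  Quot.sound ⟨h, Or.inl rfl⟩

/-- Spherical simplices of `Sⁿ ∧ k₊` in dimension `m ≠ n` are the basepoint. -/
lemma smash_sph_eq_pt {n k m : ℕ} (hmn : m ≠ n) (y : ((SphSS n).smash k).obj m)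
    (hy : ((SphSS n).smash k).isSph m y) : y = ((SphSS n).smash k).pt m := by
  obtain ⟨⟨a, t⟩, rfl⟩ := Quot.exists_rep y
  cases a with
  | none => exact smash_mk_pt (Or.inl rfl)
  | some f =>
    by_cases ht : t = 0
    · exact smash_mk_pt (Or.inr ht)
    exfalso
    cases m with
    | zero =>
      have hn : 0 < n := Nat.pos_of_ne_zero (fun hh => hmn hh.symm)
      obtain ⟨x0, hx0⟩ := f.2.2 ⟨0, by omega⟩
      obtain ⟨x1, hx1⟩ := f.2.2 ⟨1, by omega⟩
      have hxx : x0 = x1 := Fin.ext (by omega)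
      rw [hxx, hx1] at hx0
      exact absurd (congrArg Fin.val hx0) (by simp)
    | succ q =>
      have hns : ∀ j : Fin (q + 2), ¬ Function.Surjective (f.1 ∘ Fin.succAbove j) := by
        intro j hsurj
        have h1 : (Quot.mk _ ((SphSS n).d q j.val (some f), t) :
            Smash ((SphSS n).obj q) ((SphSS n).pt q) k) = Quot.mk _ ((SphSS n).pt q, 0) :=
          hy j.val (Nat.lt_succ_iff.mp j.isLt)
        rcases smash_mk_eq_pt h1 with h2 | h2
        · have h2' : (SphSS n).d q j.val (some f) = none := h2
          rw [← coface_eq q j] at hsurj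
          rw [sphSS_d_some, dif_pos hsurj] at h2'
          exact Option.some_ne_none _ h2'
        · exact ht h2
      have hinj := sph_inj f.1 f.2.2 hns
      have hc := Fintype.card_le_of_injective f.1 hinj
      have hc2 := Fintype.card_le_of_surjective f.1 f.2.2
      simp only [Fintype.card_fin] at hc hc2
      omega

/-- All elements of a spherical simplex of `H𝔹 ∘ X` are spherical. -/
lemma mem_sph {X : PSS} {q : ℕ} (W : (HBpss X).Sph (q + 1)) {y : X.obj (q + 1)}
    (hy : y ∈ W.1.1) : X.isSph (q + 1) y := by
  intro j hj
  have h1 : W.1.1.image (X.d q j) = {X.pt q} := congrArg Subtype.val (W.2 j hj)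
  have h2 : X.d q j y ∈ W.1.1.image (X.d q j) := Finset.mem_image_of_mem _ hy
  rw [h1] at h2
  exact Finset.mem_singleton.mp h2

lemma sph_eq_pt_ne {n k m : ℕ} (hmn : m ≠ n)
    (W : (HBpss ((SphSS n).smash k)).Sph m) :
    W.1.1 = {((SphSS n).smash k).pt m} := by
  apply Finset.eq_singleton_iff_unique_mem.mpr
  refine ⟨W.1.2, fun y hy => ?_⟩
  apply smash_sph_eq_pt hmn
  cases m with
  | zero => trivial
  | succ q => exact mem_sph W hy

lemma picomb_trivial {n k m : ℕ} (hmn : m ≠ n)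
    (a b : (HBpss ((SphSS n).smash k)).picomb m) : a = b := by
  induction a using Quot.ind with | _ W =>
  induction b using Quot.ind with | _ W' =>
  have : W = W' := Subtype.ext (Subtype.ext (by rw [sph_eq_pt_ne hmn W, sph_eq_pt_ne hmn W']))
  rw [this]

/-- In the top relevant dimension, every face map of `Sⁿ` is constant at the basepoint. -/
lemma sphSS_d_top {n q : ℕ} (hq : q < n) (j : ℕ) (a : (SphSS n).obj (q + 1)) :
    (SphSS n).d q j a = none := by
  cases a with
  | none => rfl
  | some f =>
    rw [sphSS_d_some, dif_neg]
    intro hs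
    have := Fintype.card_le_of_surjective _ hs
    simp only [Fintype.card_fin] at this
    omega

lemma smash_d_top {n k q : ℕ} (hq : q < n) (j : ℕ) (y : ((SphSS n).smash k).obj (q + 1)) :
    ((SphSS n).smash k).d q j y = ((SphSS n).smash k).pt q := by
  obtain ⟨⟨a, t⟩, rfl⟩ := Quot.exists_rep y
  show (Quot.mk _ ((SphSS n).d q j a, t) : Smash _ _ _) = Quot.mk _ ((SphSS n).pt q, 0)
  rw [sphSS_d_top hq]
  exact smash_mk_pt (Or.inl rfl)

/-- If all faces of `X` in dimension `q+1` are constant at the basepoint, every simplex of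
`H𝔹 ∘ X` in that dimension is spherical. -/
lemma HB_all_sph {X : PSS} {q : ℕ} (hface : ∀ (j : ℕ) y, X.d q j y = X.pt q)
    (W : (HBpss X).obj (q + 1)) : (HBpss X).isSph (q + 1) W := by
  intro j hj
  apply Subtype.ext
  show W.1.image (X.d q j) = {X.pt q}
  apply Finset.eq_singleton_iff_unique_mem.mpr
  constructor
  · exact Finset.mem_image.mpr ⟨X.pt (q + 1), W.2, hface j _⟩
  · intro x hx
    obtain ⟨y, _, rfl⟩ := Finset.mem_image.mp hx
    exact hface j y

/-- The relation `Rel` at level `n` implies equality, smash case. -/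
lemma rel_eq_smash {n k : ℕ} (a b : (HBpss ((SphSS n).smash k)).Sph n)
    (h : (HBpss ((SphSS n).smash k)).Rel n a b) : a = b := by
  obtain ⟨W, h1, h2, h3⟩ := h
  apply Subtype.ext
  apply Subtype.ext
  have key : ∀ y ∈ (W.1 : Finset (((SphSS n).smash k).obj (n + 1))),
      ((SphSS n).smash k).d n n y = ((SphSS n).smash k).d n (n + 1) y := by
    intro y hy
    obtain ⟨⟨c, t⟩, rfl⟩ := Quot.exists_rep y
    cases c with
    | none => rfl
    | some f =>
      by_cases ht : t = 0
      · exact Quot.sound ⟨Or.inr ht, Or.inr ht⟩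
      have hnone : ∀ j < n, (SphSS n).d n j (some f) = none := by
        intro j hj
        have him : ((SphSS n).smash k).d n j (Quot.mk _ (some f, t)) ∈
            W.1.image (((SphSS n).smash k).d n j) :=
          Finset.mem_image_of_mem _ hy
        have heq : W.1.image (((SphSS n).smash k).d n j) =
            {((SphSS n).smash k).pt n} := congrArg Subtype.val (h1 j hj)
        rw [heq] at him
        have hpt : (Quot.mk _ ((SphSS n).d n j (some f), t) :
            Smash ((SphSS n).obj n) ((SphSS n).pt n) k) = Quot.mk _ ((SphSS n).pt n, 0) :=
          Finset.mem_singleton.mp him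
        rcases smash_mk_eq_pt hpt with h4 | h4
        · exact h4
        · exact absurd h4 ht
      have hcore := core (some f) hnone
      show (Quot.mk _ ((SphSS n).d n n (some f), t) : Smash _ _ _) =
        Quot.mk _ ((SphSS n).d n (n + 1) (some f), t)
      rw [hcore]
  calc a.1.1 = W.1.image (((SphSS n).smash k).d n n) := (congrArg Subtype.val h2).symm
    _ = W.1.image (((SphSS n).smash k).d n (n + 1)) :=
        Finset.image_congr (fun y hy => key y (Finset.mem_coe.mp hy))
    _ = b.1.1 := congrArg Subtype.val h3

/-- The relation `Rel` at level `n` implies equality, plain case. -/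
lemma rel_eq_plain {n : ℕ} (a b : (HBpss (SphSS n)).Sph n)
    (h : (HBpss (SphSS n)).Rel n a b) : a = b := by
  obtain ⟨W, h1, h2, h3⟩ := h
  apply Subtype.ext
  apply Subtype.ext
  have key : ∀ y ∈ (W.1 : Finset ((SphSS n).obj (n + 1))),
      (SphSS n).d n n y = (SphSS n).d n (n + 1) y := by
    intro y hy
    apply core
    intro j hj
    have him : (SphSS n).d n j y ∈ W.1.image ((SphSS n).d n j) :=
      Finset.mem_image_of_mem _ hy
    have heq : W.1.image ((SphSS n).d n j) = {(SphSS n).pt n} :=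
      congrArg Subtype.val (h1 j hj)
    rw [heq] at him
    exact Finset.mem_singleton.mp him
  calc a.1.1 = W.1.image ((SphSS n).d n n) := (congrArg Subtype.val h2).symm
    _ = W.1.image ((SphSS n).d n (n + 1)) :=
        Finset.image_congr (fun y hy => key y (Finset.mem_coe.mp hy))
    _ = b.1.1 := congrArg Subtype.val h3

/-- `π₀comb` as a quotient by a relation implying equality is the set of spheres. -/
def picombEquivSph (X : PSS) (m : ℕ) (h : ∀ a b : X.Sph m, X.Rel m a b → a = b) :
    X.picomb m ≃ X.Sph m where
  toFun := Quot.lift id (fun a b hab => h a b hab)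
  invFun := Quot.mk _
  left_inv q := by
    induction q using Quot.ind with
    | _ a => rfl
  right_inv _ := rfl

def sphEquivObj (X : PSS) (m : ℕ) (h : ∀ W : (HBpss X).obj m, (HBpss X).isSph m W) :
    (HBpss X).Sph m ≃ (HBpss X).obj m where
  toFun := Subtype.val
  invFun W := ⟨W, h W⟩
  left_inv x := Subtype.ext rfl
  right_inv _ := rfl

end Aux2

section Aux3

open Function

/-- The unique monotone surjection `[n] → [n]`. -/
def idS (n : ℕ) : {f : Fin (n + 1) → Fin (n + 1) // Monotone f ∧ Function.Surjective f} :=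
  ⟨id, monotone_id, Function.surjective_id⟩

lemma eq_idS {n : ℕ} (f : {f : Fin (n + 1) → Fin (n + 1) // Monotone f ∧ Function.Surjective f}) :
    f = idS n := Subtype.ext (monotone_surj_id f.1 f.2.1 f.2.2)

/-- The pointed bijection `k₊ ≃ (Sⁿ ∧ k₊)_n`. -/
noncomputable def eEquiv (n k : ℕ) : Fin (k + 1) ≃ ((SphSS n).smash k).obj n where
  toFun t := Quot.mk _ (some (idS n), t)
  invFun := Quot.lift (fun u => match u.1 with | none => 0 | some _ => u.2) (by
    have h0 : ∀ (b : Option _) (s : Fin (k + 1)), (b = (SphSS n).pt n ∨ s = 0) →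
        (match b with | none => 0 | some _ => s) = (0 : Fin (k + 1)) := by
      rintro b s (hb | hs)
      · have hb' : b = none := hb
        subst hb'; rfl
      · subst hs; cases b <;> rfl
    rintro ⟨a, t⟩ ⟨a', t'⟩ ⟨hu, hv⟩
    exact (h0 a t hu).trans (h0 a' t' hv).symm)
  left_inv t := rfl
  right_inv y := by
    obtain ⟨⟨a, t⟩, rfl⟩ := Quot.exists_rep y
    cases a with
    | none => exact Quot.sound ⟨Or.inr rfl, Or.inl rfl⟩
    | some f => exact congrArg (fun g => Quot.mk _ (some g, t)) (eq_idS f).symm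

lemma eEquiv_symm_pt (n k : ℕ) : (eEquiv n k).symm (((SphSS n).smash k).pt n) = 0 := rfl

/-- The `n`-simplices of `H𝔹 ∘ (Sⁿ ∧ k₊)` are `H𝔹(k₊)`. -/
noncomputable def objEquivFinset (n k : ℕ) :
    (HBpss ((SphSS n).smash k)).obj n ≃ {Z : Finset (Fin (k + 1)) // 0 ∈ Z} :=
  (((eEquiv n k).finsetCongr.subtypeEquiv (p := fun Z => (0 : Fin (k + 1)) ∈ Z)
    (q := fun Z => ((SphSS n).smash k).pt n ∈ Z) (fun Z => by
      show (0 : Fin (k + 1)) ∈ Z ↔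
        ((SphSS n).smash k).pt n ∈ Finset.map (eEquiv n k).toEmbedding Z
      rw [Finset.mem_map_equiv, eEquiv_symm_pt])) :
        {Z : Finset (Fin (k + 1)) // 0 ∈ Z} ≃ (HBpss ((SphSS n).smash k)).obj n).symm

/-- Every `n`-simplex of `H𝔹 ∘ (Sⁿ ∧ k₊)` is spherical. -/
lemma all_sph_smash (n k : ℕ) (W : (HBpss ((SphSS n).smash k)).obj n) :
    (HBpss ((SphSS n).smash k)).isSph n W := by
  cases n with
  | zero => trivial
  | succ q => exact HB_all_sph (fun j y => smash_d_top (Nat.lt_succ_self q) j y) W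

/-- Every `n`-simplex of `H𝔹 ∘ Sⁿ` is spherical. -/
lemma all_sph_plain (n : ℕ) (W : (HBpss (SphSS n)).obj n) :
    (HBpss (SphSS n)).isSph n W := by
  cases n with
  | zero => trivial
  | succ q => exact HB_all_sph (fun j y => sphSS_d_top (Nat.lt_succ_self q) j y) W

/-- The two `n`-simplices `{*}` and `{*, ι}` of `H𝔹 ∘ Sⁿ`. -/
noncomputable def bmap (n : ℕ) : Bool → (HBpss (SphSS n)).obj n
  | true => ⟨Finset.cons (some (idS n)) {none} (fun h => Option.some_ne_none _ (Finset.mem_singleton.mp h)),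
      Finset.mem_cons.mpr (Or.inr (Finset.mem_singleton_self _))⟩
  | false => ⟨{none}, Finset.mem_singleton_self _⟩

lemma mem_bmap_true (n : ℕ) : some (idS n) ∈ (bmap n true).1 := by
  simp only [bmap]
  exact Finset.mem_cons_self _ _

lemma mem_bmap_false (n : ℕ) {x : (SphSS n).obj n} (hx : x ∈ (bmap n false).1) : x = none :=
  Finset.mem_singleton.mp hx

lemma bmap_bij (n : ℕ) : Function.Bijective (bmap n) := by
  constructor
  · intro b b' hbb'
    have key : ∀ c c' : Bool, bmap n c = bmap n c' → c = true → c' = false → False := by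
      intro c c' hcc' hc hc'
      subst hc; subst hc'
      have h3 := mem_bmap_true n
      rw [hcc'] at h3
      exact Option.some_ne_none _ (mem_bmap_false n h3)
    cases b <;> cases b' <;> first
      | rfl
      | exact absurd hbb' (fun hh => key _ _ hh.symm rfl rfl)
      | exact absurd hbb' (fun hh => key _ _ hh rfl rfl)
  · intro Z
    by_cases h : some (idS n) ∈ Z.1
    · refine ⟨true, Subtype.ext ?_⟩
      simp only [bmap]
      apply Finset.ext
      intro x
      constructor
      · intro hx
        rcases Finset.mem_cons.mp hx with rfl | hx2
        · exact h
        · rw [Finset.mem_singleton.mp hx2]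
          exact Z.2
      · intro hx
        cases x with
        | none => exact Finset.mem_cons.mpr (Or.inr (Finset.mem_singleton_self _))
        | some f =>
          rw [eq_idS f]
          exact mem_bmap_true n
    · refine ⟨false, Subtype.ext ?_⟩
      simp only [bmap]
      apply Finset.ext
      intro x
      constructor
      · intro hx
        rw [mem_bmap_false n hx]
        exact Z.2
      · intro hx
        cases x with
        | none => exact Finset.mem_singleton_self _
        | some f => exact absurd (by rw [eq_idS f] at hx; exact hx) h

/-- The `n`-simplices of `H𝔹 ∘ Sⁿ` form a two-element set. -/
noncomputable def objEquivBool (n : ℕ) : (HBpss (SphSS n)).obj n ≃ Bool :=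
  (Equiv.ofBijective (bmap n) (bmap_bij n)).symm

end Aux3

/-- Homology of the sphere with coefficients in the Boolean `Γ`-set `H𝔹`:
`H_m(Sⁿ, H𝔹)(k₊) = π^comb_m(H𝔹 ∘ (Sⁿ ∧ k₊))` is a point for `m ≠ n`, while for
`m = n` it is `H𝔹(k₊)` (finite subsets of `k₊` containing the basepoint); in particular
`π^comb_n(H𝔹 ∘ Sⁿ) ≅ 𝔹` has two elements. -/
theorem stmt11 (n k : ℕ) (hk : 0 < k) :
    (∀ m, m ≠ n → (∀ a b : (HBpss ((SphSS n).smash k)).picomb m, a = b) ∧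
      Nonempty ((HBpss ((SphSS n).smash k)).picomb m)) ∧
    Nonempty ((HBpss ((SphSS n).smash k)).picomb n ≃ {Z : Finset (Fin (k + 1)) // 0 ∈ Z}) ∧
    Nonempty ((HBpss (SphSS n)).picomb n ≃ Bool) := by
  refine ⟨fun m hmn => ⟨fun a b => picomb_trivial hmn a b,
    ⟨(HBpss ((SphSS n).smash k)).picombPt m⟩⟩, ⟨?_⟩, ⟨?_⟩⟩
  · exact (picombEquivSph _ n (fun a b h => rel_eq_smash a b h)).trans
      ((sphEquivObj _ n (all_sph_smash n k)).trans (objEquivFinset n k))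
  · exact (picombEquivSph _ n (fun a b h => rel_eq_plain a b h)).trans
      ((sphEquivObj _ n (all_sph_plain n)).trans (objEquivBool n))
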